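/- Let m ≥ 0 be an integer and set z = x + y + 1 ∈ ℝ[x,y]. Then the family of polynomials {x^i y^j z^k : i, j, k ≥ 0, i + j + k = m} is a basis of the ℝ-vector space P_m; in particular these binom(m+2, 2) polynomials are linearly independent and every polynomial of total degree at most m is a unique ℝ-linear combination of them. -/

import Mathlib

open MvPolynomial

noncomputable section

/-- Bivariate real polynomials. -/
abbrev Pol := MvPolynomial (Fin 2) ℝ

/-- `Pm m`: the subspace of polynomials of total degree at most `m`. -/
def Pm (m : ℕ) : Submodule ℝ Pol := MvPolynomial.restrictTotalDegree (Fin 2) ℝ m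

open Finset in
lemma mono_mem (m : ℕ) : ∀ c a b : ℕ, a + b + c = m →
    (X 0 : Pol) ^ a * X 1 ^ b ∈ Submodule.span ℝ
      (Set.range (fun t : {t : ℕ × ℕ × ℕ // t.1 + t.2.1 + t.2.2 = m} =>
        (X 0 : Pol) ^ t.1.1 * X 1 ^ t.1.2.1 * (X 0 + X 1 + 1) ^ t.1.2.2)) := by
  intro c
  induction c using Nat.strong_induction_on with
  | _ c IH =>
    intro a b habc
    rcases Nat.eq_zero_or_pos c with hc | hc
    · subst hc
      have h : (X 0 : Pol) ^ a * X 1 ^ b =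
          (X 0 : Pol) ^ a * X 1 ^ b * (X 0 + X 1 + 1) ^ 0 := by ring
      rw [h]
      exact Submodule.subset_span ⟨⟨(a, b, 0), by simpa using habc⟩, rfl⟩
    · have h1 : ((X 0 : Pol) + X 1 + 1) ^ c
          = ∑ k ∈ range (c + 1), (X 0 + X 1) ^ k * (c.choose k : Pol) := by
        rw [add_pow]
        simp
      have key : (X 0 : Pol) ^ a * X 1 ^ b =
          (X 0 : Pol) ^ a * X 1 ^ b * (X 0 + X 1 + 1) ^ c
          - ∑ j ∈ range c,
              ((c.choose (j + 1) : ℝ)) •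
              ((X 0 : Pol) ^ a * X 1 ^ b * (X 0 + X 1) ^ (j + 1)) := by
        rw [h1, mul_sum, sum_range_succ']
        simp only [pow_zero, Nat.choose_zero_right, Nat.cast_one, mul_one]
        rw [eq_sub_iff_add_eq, add_comm]
        congr 1
        refine sum_congr rfl fun j hj => ?_
        rw [smul_eq_C_mul, map_natCast]
        ring
      rw [key]
      refine sub_mem (Submodule.subset_span ⟨⟨(a, b, c), habc⟩, rfl⟩) ?_
      refine Submodule.sum_mem _ fun j hj => Submodule.smul_mem _ _ ?_
      have hexp : (X 0 : Pol) ^ a * X 1 ^ b * (X 0 + X 1) ^ (j + 1) =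
          ∑ i ∈ range (j + 2),
            ((j + 1).choose i : ℝ) • ((X 0 : Pol) ^ (a + i) * X 1 ^ (b + (j + 1 - i))) := by
        rw [add_pow, mul_sum]
        refine sum_congr rfl fun i hi => ?_
        rw [smul_eq_C_mul, map_natCast, pow_add, pow_add]
        ring
      rw [hexp]
      refine Submodule.sum_mem _ fun i hi => Submodule.smul_mem _ _ ?_
      have hj' : j + 1 ≤ c := mem_range.mp hj
      have hi' : i ≤ j + 1 := by have := mem_range.mp hi; omega
      exact IH (c - (j + 1)) (by omega) _ _ (by omega)

lemma fmem (m : ℕ) (t : {t : ℕ × ℕ × ℕ // t.1 + t.2.1 + t.2.2 = m}) :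
    (X 0 : Pol) ^ t.1.1 * X 1 ^ t.1.2.1 * (X 0 + X 1 + 1) ^ t.1.2.2 ∈ Pm m := by
  rw [Pm, mem_restrictTotalDegree]
  have hz : ((X 0 : Pol) + X 1 + 1).totalDegree ≤ 1 := by
    refine (totalDegree_add _ _).trans ?_
    simp only [totalDegree_one]
    refine max_le ((totalDegree_add _ _).trans ?_) (by omega)
    simp [totalDegree_X]
  calc ((X 0 : Pol) ^ t.1.1 * X 1 ^ t.1.2.1 * (X 0 + X 1 + 1) ^ t.1.2.2).totalDegree
      ≤ ((X 0 : Pol) ^ t.1.1 * X 1 ^ t.1.2.1).totalDegree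
          + ((X 0 + X 1 + 1 : Pol) ^ t.1.2.2).totalDegree := totalDegree_mul _ _
    _ ≤ (((X 0 : Pol) ^ t.1.1).totalDegree + ((X 1 : Pol) ^ t.1.2.1).totalDegree)
          + t.1.2.2 * ((X 0 + X 1 + 1 : Pol)).totalDegree :=
        add_le_add (totalDegree_mul _ _) (totalDegree_pow _ _)
    _ ≤ (t.1.1 + t.1.2.1) + t.1.2.2 * 1 := by
        refine add_le_add (add_le_add ?_ ?_) (Nat.mul_le_mul_left _ hz) <;>
          simp [totalDegree_X_pow]
    _ ≤ m := by have := t.2; omega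

lemma span_eq (m : ℕ) :
    Submodule.span ℝ
      (Set.range (fun t : {t : ℕ × ℕ × ℕ // t.1 + t.2.1 + t.2.2 = m} =>
        (X 0 : Pol) ^ t.1.1 * X 1 ^ t.1.2.1 * (X 0 + X 1 + 1) ^ t.1.2.2)) = Pm m := by
  apply le_antisymm
  · rw [Submodule.span_le]
    rintro _ ⟨t, rfl⟩
    exact fmem m t
  · intro p hp
    rw [p.as_sum]
    refine Submodule.sum_mem _ fun v hv => ?_
    have hdeg : v 0 + v 1 ≤ m := by
      have h1 : p.totalDegree ≤ m := by rw [Pm, mem_restrictTotalDegree] at hp; exact hp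
      rw [totalDegree] at h1
      have h2 : (v.sum fun _ e => e) ≤ m :=
        le_trans (Finset.le_sup (f := fun s => s.sum fun _ e => e) hv) h1
      rwa [Finsupp.sum_fintype _ _ (fun _ => rfl), Fin.sum_univ_two] at h2
    have hmon : monomial v (coeff v p) = coeff v p • ((X 0 : Pol) ^ v 0 * X 1 ^ v 1) := by
      rw [smul_eq_C_mul, monomial_eq, Finsupp.prod_fintype _ _ (fun _ => pow_zero _),
        Fin.prod_univ_two]
    rw [hmon]
    exact Submodule.smul_mem _ _ (mono_mem m (m - (v 0 + v 1)) (v 0) (v 1) (by omega))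

lemma deg_two (s : Fin 2 →₀ ℕ) : (s.sum fun _ e => e) = s 0 + s 1 := by
  rw [Finsupp.sum_fintype _ _ (fun _ => rfl), Fin.sum_univ_two]

/-- Bijection between triples summing to `m` and exponent vectors of degree ≤ m. -/
def triEquiv (m : ℕ) : {t : ℕ × ℕ × ℕ // t.1 + t.2.1 + t.2.2 = m} ≃
    {s : Fin 2 →₀ ℕ // s ∈ {n : Fin 2 →₀ ℕ | (n.sum fun _ e => e) ≤ m}} where
  toFun t := ⟨Finsupp.equivFunOnFinite.symm ![t.1.1, t.1.2.1], by
    have := t.2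
    simp only [Set.mem_setOf_eq, deg_two, Finsupp.coe_equivFunOnFinite_symm,
      Matrix.cons_val_zero, Matrix.cons_val_one, Matrix.head_cons]
    omega⟩
  invFun s := ⟨(s.1 0, s.1 1, m - (s.1 0 + s.1 1)), by
    have := s.2
    simp only [Set.mem_setOf_eq, deg_two] at this
    simp only []
    omega⟩
  left_inv t := by
    have := t.2
    ext <;> simp [Finsupp.coe_equivFunOnFinite_symm] <;> try omega
  right_inv s := by
    ext a
    fin_cases a <;> simp [Finsupp.coe_equivFunOnFinite_symm]

instance fintypePair (m : ℕ) : Fintype {t : ℕ × ℕ × ℕ // t.1 + t.2.1 + t.2.2 = m} :=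
  Fintype.ofInjective (fun t => ((⟨t.1.1, by omega⟩ : Fin (m+1)), (⟨t.1.2.1, by omega⟩ : Fin (m+1))))
    (by
      rintro ⟨⟨a, b, c⟩, h⟩ ⟨⟨a', b', c'⟩, h'⟩ he
      simp only [Prod.mk.injEq, Fin.mk.injEq] at he
      simp only [Subtype.mk.injEq, Prod.mk.injEq]
      dsimp only at h h'
      omega)

lemma finrank_Pm (m : ℕ) :
    Module.finrank ℝ (Pm m) = Fintype.card {t : ℕ × ℕ × ℕ // t.1 + t.2.1 + t.2.2 = m} := by
  letI : Fintype {s : Fin 2 →₀ ℕ // s ∈ {n : Fin 2 →₀ ℕ | (n.sum fun _ e => e) ≤ m}} :=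
    Fintype.ofEquiv _ (triEquiv m)
  have b : Module.Basis {s : Fin 2 →₀ ℕ // s ∈ {n : Fin 2 →₀ ℕ | (n.sum fun _ e => e) ≤ m}} ℝ (Pm m) :=
    MvPolynomial.basisRestrictSupport ℝ _
  rw [Module.finrank_eq_card_basis b, Fintype.card_congr (triEquiv m)]

theorem indep (m : ℕ) :
    LinearIndependent ℝ (fun t : {t : ℕ × ℕ × ℕ // t.1 + t.2.1 + t.2.2 = m} =>
      (X 0 : Pol) ^ t.1.1 * X 1 ^ t.1.2.1 * (X 0 + X 1 + 1) ^ t.1.2.2) := by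
  set g : {t : ℕ × ℕ × ℕ // t.1 + t.2.1 + t.2.2 = m} → Pm m :=
    fun t => ⟨(X 0 : Pol) ^ t.1.1 * X 1 ^ t.1.2.1 * (X 0 + X 1 + 1) ^ t.1.2.2, fmem m t⟩ with hg
  have hcomp : (Pm m).subtype ∘ g = fun t : {t : ℕ × ℕ × ℕ // t.1 + t.2.1 + t.2.2 = m} =>
      (X 0 : Pol) ^ t.1.1 * X 1 ^ t.1.2.1 * (X 0 + X 1 + 1) ^ t.1.2.2 := rfl
  have hspan : ⊤ ≤ Submodule.span ℝ (Set.range g) := by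
    have hmap : Submodule.map (Pm m).subtype (Submodule.span ℝ (Set.range g)) =
        Submodule.span ℝ (Set.range fun t : {t : ℕ × ℕ × ℕ // t.1 + t.2.1 + t.2.2 = m} =>
          (X 0 : Pol) ^ t.1.1 * X 1 ^ t.1.2.1 * (X 0 + X 1 + 1) ^ t.1.2.2) := by
      rw [Submodule.map_span, ← Set.range_comp, hcomp]
    have : Submodule.map (Pm m).subtype (Submodule.span ℝ (Set.range g)) =
        Submodule.map (Pm m).subtype ⊤ := by
      rw [hmap, span_eq, Submodule.map_top, Submodule.range_subtype]
    exact le_of_eq (Submodule.map_injective_of_injective (Pm m).injective_subtype this).symm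
  have hcard : Fintype.card {t : ℕ × ℕ × ℕ // t.1 + t.2.1 + t.2.2 = m} =
      Module.finrank ℝ (Pm m) := (finrank_Pm m).symm
  have hli : LinearIndependent ℝ g :=
    linearIndependent_of_top_le_span_of_card_eq_finrank hspan hcard
  have := hli.map' (Pm m).subtype (Submodule.ker_subtype _)
  rwa [hcomp] at this

/-- With `z = x + y + 1`, the family
`{xⁱ yʲ zᵏ : i + j + k = m}` is a basis of `Pₘ`: it is linearly independent and
spans the space of polynomials of total degree at most `m`. -/
theorem stmt3 (m : ℕ) :
    LinearIndependent ℝ (fun t : {t : ℕ × ℕ × ℕ // t.1 + t.2.1 + t.2.2 = m} =>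
      (X 0 : Pol) ^ t.1.1 * X 1 ^ t.1.2.1 * (X 0 + X 1 + 1) ^ t.1.2.2) ∧
    Submodule.span ℝ
      (Set.range (fun t : {t : ℕ × ℕ × ℕ // t.1 + t.2.1 + t.2.2 = m} =>
        (X 0 : Pol) ^ t.1.1 * X 1 ^ t.1.2.1 * (X 0 + X 1 + 1) ^ t.1.2.2)) = Pm m := by
  exact ⟨indep m, span_eq m⟩

end
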